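/- arXiv:2509.12841 — 2 statements merged into one kernel-verified Lean document; each statement's English description precedes it below -/
import Mathlib

section
/- For every β > 0, θ > 0 and m ∈ ℝ, the map F(m) = N(m)/Z(m) is differentiable at m, and its derivative equals βθ times the variance of the probability density p_m; that is, F′(m) = βθ · ( ∫_ℝ x² p_m(x) dx − (∫_ℝ x p_m(x) dx)² ). -/
open MeasureTheory Real

/-- `Hfun β θ m x = β·V(x) + (βθ/2)(x − m)²` with the double-well potential `V(x) = (x²−1)²`. -/
noncomputable def Hfun (β θ m x : ℝ) : ℝ :=
  β * (x ^ 2 - 1) ^ 2 + β * θ / 2 * (x - m) ^ 2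

/-- `Zfun β θ m = ∫ exp(−H_m(x)) dx`, the normalizing constant. -/
noncomputable def Zfun (β θ m : ℝ) : ℝ := ∫ x : ℝ, Real.exp (-(Hfun β θ m x))

/-- `Nfun β θ m = ∫ x·exp(−H_m(x)) dx`. -/
noncomputable def Nfun (β θ m : ℝ) : ℝ := ∫ x : ℝ, x * Real.exp (-(Hfun β θ m x))

/-- The one-step fixed-point map `F(m) = N(m)/Z(m)` (the mean of `p_m`). -/
noncomputable def Fmap (β θ m : ℝ) : ℝ := Nfun β θ m / Zfun β θ m

/-- The probability density `p_m(x) = exp(−H_m(x))/Z(m)`. -/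
noncomputable def pdens (β θ m x : ℝ) : ℝ := Real.exp (-(Hfun β θ m x)) / Zfun β θ m

section aux
variable {β θ : ℝ}

lemma gauss_int (hβ : 0 < β) (n : ℕ) : Integrable (fun x : ℝ => |x| ^ n * Real.exp (-β * x ^ 2)) := by
  have h := integrable_rpow_mul_exp_neg_mul_sq hβ (s := (n : ℝ))
    (lt_of_lt_of_le neg_one_lt_zero (Nat.cast_nonneg n))
  simp_rw [Real.rpow_natCast] at h
  refine h.abs.congr ?_
  filter_upwards with x
  rw [abs_mul, abs_pow, abs_of_pos (Real.exp_pos _)]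

lemma exp_H_le (hβ : 0 < β) (hθ : 0 < θ) (m x : ℝ) :
    Real.exp (-(Hfun β θ m x)) ≤ Real.exp (5 * β / 4) * Real.exp (-β * x ^ 2) := by
  rw [← Real.exp_add, Real.exp_le_exp, Hfun]
  nlinarith [sq_nonneg (x - m), sq_nonneg (x ^ 2 - 3 / 2), mul_pos hβ hθ]

lemma cont_H (m : ℝ) : Continuous fun x => Real.exp (-(Hfun β θ m x)) := by
  unfold Hfun; fun_prop

lemma int_abs_pow (hβ : 0 < β) (hθ : 0 < θ) (n : ℕ) (m : ℝ) :
    Integrable fun x : ℝ => |x| ^ n * Real.exp (-(Hfun β θ m x)) := by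
  refine Integrable.mono' (((gauss_int hβ n).const_mul (Real.exp (5 * β / 4)))) ?_ ?_
  · exact (((continuous_abs.pow n).mul (cont_H (β := β) (θ := θ) m)).aestronglyMeasurable)
  · filter_upwards with x
    rw [Real.norm_eq_abs, abs_mul, abs_pow, abs_abs, abs_of_pos (Real.exp_pos _)]
    calc |x| ^ n * Real.exp (-(Hfun β θ m x))
        ≤ |x| ^ n * (Real.exp (5 * β / 4) * Real.exp (-β * x ^ 2)) := by
          gcongr; exact exp_H_le hβ hθ m x
      _ = Real.exp (5 * β / 4) * (|x| ^ n * Real.exp (-β * x ^ 2)) := by ring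

lemma int_pow (hβ : 0 < β) (hθ : 0 < θ) (n : ℕ) (m : ℝ) :
    Integrable fun x : ℝ => x ^ n * Real.exp (-(Hfun β θ m x)) := by
  refine Integrable.mono' (int_abs_pow hβ hθ n m) ?_ ?_
  · exact ((continuous_pow n).mul (cont_H (β := β) (θ := θ) m)).aestronglyMeasurable
  · filter_upwards with x
    rw [Real.norm_eq_abs, abs_mul, abs_pow, abs_of_pos (Real.exp_pos _)]

lemma deriv_exp_H (x m : ℝ) :
    HasDerivAt (fun m => Real.exp (-(Hfun β θ m x)))
      (β * θ * (x - m) * Real.exp (-(Hfun β θ m x))) m := by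
  have hx : HasDerivAt (fun m : ℝ => (x - m) ^ 2) (2 * (x - m) ^ 1 * (-1)) m :=
    ((hasDerivAt_id m).const_sub x).pow 2
  have h2 : HasDerivAt (fun m : ℝ => -(Hfun β θ m x)) (β * θ * (x - m)) m := by
    have := (((hx.const_mul (β * θ / 2)).const_add (β * (x ^ 2 - 1) ^ 2)).neg)
    unfold Hfun
    refine this.congr_deriv (Eq.symm ?_)
    ring
  have := h2.exp
  convert this using 1
  ring

/-- master: derivative of the n-th moment integral -/
lemma deriv_moment (hβ : 0 < β) (hθ : 0 < θ) (n : ℕ) (m : ℝ) :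
    HasDerivAt (fun m' => ∫ x : ℝ, x ^ n * Real.exp (-(Hfun β θ m' x)))
      (∫ x : ℝ, x ^ n * (β * θ * (x - m) * Real.exp (-(Hfun β θ m x)))) m := by
  have key := hasDerivAt_integral_of_dominated_loc_of_deriv_le (μ := volume)
    (F := fun m' x => x ^ n * Real.exp (-(Hfun β θ m' x)))
    (F' := fun m' x => x ^ n * (β * θ * (x - m') * Real.exp (-(Hfun β θ m' x))))
    (x₀ := m)
    (bound := fun x => β * θ * Real.exp (5 * β / 4) *
      ((|x| ^ (n + 1) + (|m| + 1) * |x| ^ n) * Real.exp (-β * x ^ 2)))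
    (s := Metric.ball m 1) (Metric.ball_mem_nhds m one_pos)
    ?meas ?int ?meas' ?bnd ?bint ?diff
  · exact key.2
  case meas =>
    filter_upwards with m'
    exact ((continuous_pow n).mul (cont_H (β := β) (θ := θ) m')).aestronglyMeasurable
  case int => exact int_pow hβ hθ n m
  case meas' =>
    have : Continuous fun x : ℝ =>
        x ^ n * (β * θ * (x - m) * Real.exp (-(Hfun β θ m x))) := by
      exact (continuous_pow n).mul (((continuous_const.mul
        (continuous_id.sub continuous_const)).mul (cont_H (β := β) (θ := θ) m)))
    exact this.aestronglyMeasurable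
  case bnd =>
    filter_upwards with x m' hm'
    rw [Metric.mem_ball, Real.dist_eq] at hm'
    have h1 : |x - m'| ≤ |x| + (|m| + 1) := by
      have : |m'| ≤ |m| + 1 := by
        have := abs_sub_abs_le_abs_sub m' m
        linarith [le_of_lt hm']
      calc |x - m'| ≤ |x| + |m'| := abs_sub x m'
        _ ≤ |x| + (|m| + 1) := by linarith
    have h2 := exp_H_le hβ hθ m' x
    rw [Real.norm_eq_abs, abs_mul, abs_mul, abs_mul, abs_pow]
    rw [abs_of_pos (Real.exp_pos _), abs_of_pos (mul_pos hβ hθ)]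
    have hxn : (0:ℝ) ≤ |x| ^ n := by positivity
    calc |x| ^ n * (β * θ * |x - m'| * Real.exp (-(Hfun β θ m' x)))
        ≤ |x| ^ n * (β * θ * (|x| + (|m| + 1)) *
            (Real.exp (5 * β / 4) * Real.exp (-β * x ^ 2))) := by
          gcongr
      _ = β * θ * Real.exp (5 * β / 4) *
          ((|x| ^ (n + 1) + (|m| + 1) * |x| ^ n) * Real.exp (-β * x ^ 2)) := by ring
  case bint =>
    have h1 := (gauss_int hβ (n + 1)).add ((gauss_int hβ n).const_mul (|m| + 1))
    have h2 := h1.const_mul (β * θ * Real.exp (5 * β / 4))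
    refine h2.congr ?_
    filter_upwards with x
    simp only [Pi.add_apply]
    ring
  case diff =>
    filter_upwards with x m' _
    exact (deriv_exp_H (β := β) (θ := θ) x m').const_mul (x ^ n)

lemma Z_pos (hβ : 0 < β) (hθ : 0 < θ) (m : ℝ) : 0 < Zfun β θ m := by
  have hint : Integrable fun x : ℝ => Real.exp (-(Hfun β θ m x)) := by
    simpa using int_pow hβ hθ 0 m
  rw [Zfun]
  rw [integral_pos_iff_support_of_nonneg_ae (ae_of_all _ fun x => (Real.exp_pos _).le) hint]
  have : (Function.support fun x : ℝ => Real.exp (-(Hfun β θ m x))) = Set.univ := by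
    ext x; simp [Real.exp_ne_zero]
  rw [this]
  simp

end aux

/-- `F(m) = N(m)/Z(m)` is differentiable at every `m`, with
`F′(m) = βθ·(∫ x² p_m(x) dx − (∫ x p_m(x) dx)²)`, i.e. βθ times the variance of `p_m`. -/
theorem stmt_3 (β θ : ℝ) (hβ : 0 < β) (hθ : 0 < θ) (m : ℝ) :
    HasDerivAt (Fmap β θ)
      (β * θ * ((∫ x : ℝ, x ^ 2 * pdens β θ m x) - (∫ x : ℝ, x * pdens β θ m x) ^ 2)) m := by
  set M2 : ℝ := ∫ x : ℝ, x ^ 2 * Real.exp (-(Hfun β θ m x)) with hM2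
  have hZ0 := Z_pos hβ hθ m
  -- derivative of Z
  have hZ : HasDerivAt (Zfun β θ) (β * θ * (Nfun β θ m - m * Zfun β θ m)) m := by
    have h := deriv_moment hβ hθ 0 m
    simp only [pow_zero, one_mul] at h
    have heq : (∫ x : ℝ, β * θ * (x - m) * Real.exp (-(Hfun β θ m x)))
        = β * θ * (Nfun β θ m - m * Zfun β θ m) := by
      have h1 := int_pow hβ hθ 1 m
      have h0 := int_pow hβ hθ 0 m
      simp only [pow_one, pow_zero, one_mul] at h1 h0
      rw [show (fun x : ℝ => β * θ * (x - m) * Real.exp (-(Hfun β θ m x)))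
          = fun x : ℝ => β * θ * (x * Real.exp (-(Hfun β θ m x)))
              - β * θ * m * Real.exp (-(Hfun β θ m x)) from funext fun x => by ring]
      rw [integral_sub ((h1.const_mul (β * θ))) (h0.const_mul (β * θ * m)),
        integral_const_mul, integral_const_mul, Nfun, Zfun]
      ring
    rw [heq] at h
    exact h.congr_deriv rfl
  -- derivative of N
  have hN : HasDerivAt (Nfun β θ) (β * θ * (M2 - m * Nfun β θ m)) m := by
    have h := deriv_moment hβ hθ 1 m
    simp only [pow_one] at h
    have heq : (∫ x : ℝ, x * (β * θ * (x - m) * Real.exp (-(Hfun β θ m x))))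
        = β * θ * (M2 - m * Nfun β θ m) := by
      have h2 := int_pow hβ hθ 2 m
      have h1 := int_pow hβ hθ 1 m
      simp only [pow_one] at h1
      rw [show (fun x : ℝ => x * (β * θ * (x - m) * Real.exp (-(Hfun β θ m x))))
          = fun x : ℝ => β * θ * (x ^ 2 * Real.exp (-(Hfun β θ m x)))
              - β * θ * m * (x * Real.exp (-(Hfun β θ m x))) from funext fun x => by ring]
      rw [integral_sub ((h2.const_mul (β * θ))) (h1.const_mul (β * θ * m)),
        integral_const_mul, integral_const_mul, hM2, Nfun]
      ring
    rw [heq] at h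
    exact (h.congr_deriv rfl)
  have hF := hN.div hZ hZ0.ne'
  have : Fmap β θ = fun m => Nfun β θ m / Zfun β θ m := rfl
  rw [this]
  refine hF.congr_deriv (Eq.symm ?_)
  have e2 : (∫ x : ℝ, x ^ 2 * pdens β θ m x) = M2 / Zfun β θ m := by
    simp only [pdens, div_eq_mul_inv, ← mul_assoc, hM2]
    rw [integral_mul_const]
  have e1 : (∫ x : ℝ, x * pdens β θ m x) = Nfun β θ m / Zfun β θ m := by
    simp only [pdens, div_eq_mul_inv, ← mul_assoc, Nfun]
    rw [integral_mul_const]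
  rw [e1, e2]
  field_simp
  ring
end

section
/- Let β > 0, θ > 0, and let m* ∈ ℝ be a fixed point of F (i.e. F(m*) = m*) such that βθ·( ∫_ℝ x² p_{m*}(x) dx − (m*)² ) < 1. Then the fixed-point iteration is locally contractive at m*: there exist δ > 0 and k ∈ [0,1) such that |F(x) − F(y)| ≤ k·|x − y| for all x, y in the closed interval [m* − δ, m* + δ]. -/
open MeasureTheory Real

lemma aux_int_pow_exp {b : ℝ} (hb : 0 < b) (n : ℕ) :
    Integrable fun x : ℝ => |x| ^ n * Real.exp (-b * x ^ 2) := by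
  have hI : Integrable fun x : ℝ =>
      (n.factorial * Real.exp (1 / (2 * b))) * Real.exp (-(b / 2) * x ^ 2) :=
    (integrable_exp_neg_mul_sq (by positivity)).const_mul _
  refine hI.mono' ?_ ?_
  · exact ((continuous_abs.pow n).mul
      ((continuous_const.mul (continuous_pow 2)).rexp)).aestronglyMeasurable
  · filter_upwards with x
    have h1 : |x| ^ n ≤ n.factorial * Real.exp |x| := by
      have h := Real.pow_div_factorial_le_exp (x := |x|) (abs_nonneg x) n
      have hf : (0:ℝ) < n.factorial := by positivity
      rw [div_le_iff₀ hf] at h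
      linarith
    have h2 : Real.exp |x| * Real.exp (-b * x ^ 2)
        ≤ Real.exp (1 / (2 * b)) * Real.exp (-(b / 2) * x ^ 2) := by
      rw [← Real.exp_add, ← Real.exp_add]
      apply Real.exp_le_exp.mpr
      have h2b : (0:ℝ) < 2 * b := by positivity
      have key : 2 * b * |x| ≤ 1 + b ^ 2 * x ^ 2 := by
        nlinarith [sq_nonneg (1 - b * |x|), sq_abs x]
      calc |x| + -b * x ^ 2 = (2 * b * |x|) / (2 * b) + -b * x ^ 2 := by
            field_simp
        _ ≤ (1 + b ^ 2 * x ^ 2) / (2 * b) + -b * x ^ 2 := by gcongr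
        _ = 1 / (2 * b) + -(b / 2) * x ^ 2 := by field_simp; ring
    have h0 : (0:ℝ) ≤ Real.exp (-b * x ^ 2) := (Real.exp_pos _).le
    have h3 : ‖|x| ^ n * Real.exp (-b * x ^ 2)‖ = |x| ^ n * Real.exp (-b * x ^ 2) := by
      rw [Real.norm_eq_abs, abs_of_nonneg (by positivity)]
    rw [h3]
    calc |x| ^ n * Real.exp (-b * x ^ 2)
        ≤ (n.factorial * Real.exp |x|) * Real.exp (-b * x ^ 2) := by
          apply mul_le_mul_of_nonneg_right h1 h0
      _ = n.factorial * (Real.exp |x| * Real.exp (-b * x ^ 2)) := by ring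
      _ ≤ n.factorial * (Real.exp (1 / (2 * b)) * Real.exp (-(b / 2) * x ^ 2)) := by
          apply mul_le_mul_of_nonneg_left h2 (by positivity)
      _ = (n.factorial * Real.exp (1 / (2 * b))) * Real.exp (-(b / 2) * x ^ 2) := by ring

lemma aux_exp_H_le {β θ : ℝ} (hβ : 0 < β) (hθ : 0 < θ) (m x : ℝ) :
    Real.exp (-(Hfun β θ m x)) ≤ Real.exp (5 * β / 4) * Real.exp (-β * x ^ 2) := by
  rw [← Real.exp_add]
  apply Real.exp_le_exp.mpr
  unfold Hfun
  nlinarith [sq_nonneg (x ^ 2 - 3 / 2), sq_nonneg (x - m), hβ.le, hθ.le,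
    mul_nonneg (mul_nonneg hβ.le hθ.le) (sq_nonneg (x - m))]

lemma aux_cont_x (β θ m : ℝ) (j : ℕ) :
    Continuous fun x : ℝ => x ^ j * Real.exp (-(Hfun β θ m x)) := by
  unfold Hfun; fun_prop

noncomputable def Afun (β θ : ℝ) (j : ℕ) (m : ℝ) : ℝ :=
  ∫ x : ℝ, x ^ j * Real.exp (-(Hfun β θ m x))

lemma aux_bound (β θ m x : ℝ) (hβ : 0 < β) (hθ : 0 < θ) (j : ℕ) :
    ‖x ^ j * Real.exp (-(Hfun β θ m x))‖
      ≤ Real.exp (5 * β / 4) * (|x| ^ j * Real.exp (-β * x ^ 2)) := by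
  rw [Real.norm_eq_abs, abs_mul, abs_pow, abs_of_nonneg (Real.exp_pos _).le]
  calc |x| ^ j * Real.exp (-(Hfun β θ m x))
      ≤ |x| ^ j * (Real.exp (5 * β / 4) * Real.exp (-β * x ^ 2)) :=
        mul_le_mul_of_nonneg_left (aux_exp_H_le hβ hθ m x) (by positivity)
    _ = Real.exp (5 * β / 4) * (|x| ^ j * Real.exp (-β * x ^ 2)) := by ring

lemma aux_int_A {β θ : ℝ} (hβ : 0 < β) (hθ : 0 < θ) (j : ℕ) (m : ℝ) :
    Integrable fun x : ℝ => x ^ j * Real.exp (-(Hfun β θ m x)) := by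
  refine (((aux_int_pow_exp hβ j).const_mul (Real.exp (5 * β / 4))).mono'
    (aux_cont_x β θ m j).aestronglyMeasurable ?_)
  filter_upwards with x
  simpa [mul_assoc] using aux_bound β θ m x hβ hθ j

lemma aux_cont_A {β θ : ℝ} (hβ : 0 < β) (hθ : 0 < θ) (j : ℕ) :
    Continuous (Afun β θ j) := by
  refine continuous_of_dominated
    (fun m => (aux_cont_x β θ m j).aestronglyMeasurable)
    (fun m => ?_)
    ((aux_int_pow_exp hβ j).const_mul (Real.exp (5 * β / 4))) ?_
  · filter_upwards with x
    simpa [mul_assoc] using aux_bound β θ m x hβ hθ j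
  · filter_upwards with x
    unfold Hfun; fun_prop

lemma aux_hasDerivAt_exp_H (β θ x m : ℝ) :
    HasDerivAt (fun m => Real.exp (-(Hfun β θ m x)))
      (β * θ * (x - m) * Real.exp (-(Hfun β θ m x))) m := by
  have h1 : HasDerivAt (fun m : ℝ => x - m) (-1) m := (hasDerivAt_id m).const_sub x
  have h2 : HasDerivAt (fun m : ℝ => (x - m) ^ 2) (2 * (x - m) ^ 1 * (-1)) m := h1.pow 2
  have h3 : HasDerivAt (fun m : ℝ => Hfun β θ m x)
      (β * θ / 2 * (2 * (x - m) ^ 1 * (-1))) m := by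
    unfold Hfun
    exact (h2.const_mul (β * θ / 2)).const_add _
  have h4 := (h3.neg).exp
  convert h4 using 1
  · rfl
  · simp only [Pi.neg_apply]; ring

lemma aux_hasDerivAt_A {β θ : ℝ} (hβ : 0 < β) (hθ : 0 < θ) (j : ℕ) (m₀ : ℝ) :
    HasDerivAt (Afun β θ j)
      (β * θ * (Afun β θ (j + 1) m₀ - m₀ * Afun β θ j m₀)) m₀ := by
  set bound : ℝ → ℝ := fun x =>
    β * θ * Real.exp (5 * β / 4) *
      (|x| ^ (j + 1) * Real.exp (-β * x ^ 2)
        + (|m₀| + 1) * (|x| ^ j * Real.exp (-β * x ^ 2))) with hbound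
  have hbi : Integrable bound :=
    (((aux_int_pow_exp hβ (j + 1)).add
      ((aux_int_pow_exp hβ j).const_mul (|m₀| + 1))).const_mul _)
  have key := hasDerivAt_integral_of_dominated_loc_of_deriv_le
    (F := fun m x => x ^ j * Real.exp (-(Hfun β θ m x)))
    (F' := fun m x => β * θ * (x - m) * (x ^ j * Real.exp (-(Hfun β θ m x))))
    (x₀ := m₀) (bound := bound) (s := Metric.ball m₀ 1) (Metric.ball_mem_nhds m₀ one_pos)
    (Filter.Eventually.of_forall fun m => (aux_cont_x β θ m j).aestronglyMeasurable)
    (aux_int_A hβ hθ j m₀)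
    (by
      apply Continuous.aestronglyMeasurable
      have := aux_cont_x β θ m₀ j
      fun_prop)
    (by
      filter_upwards with x
      intro m hm
      have hmm : |m| ≤ |m₀| + 1 := by
        have := mem_ball_iff_norm.mp hm
        rw [Real.norm_eq_abs] at this
        calc |m| = |m₀ + (m - m₀)| := by ring_nf
          _ ≤ |m₀| + |m - m₀| := abs_add_le _ _
          _ ≤ |m₀| + 1 := by linarith [this.le]
      have h1 : ‖β * θ * (x - m) * (x ^ j * Real.exp (-(Hfun β θ m x)))‖
          = β * θ * |x - m| * (|x| ^ j * Real.exp (-(Hfun β θ m x))) := by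
        simp [Real.norm_eq_abs, abs_mul, abs_pow,
          abs_of_nonneg (Real.exp_pos _).le, abs_of_pos hβ, abs_of_pos hθ]
      rw [h1, hbound]
      have hxm : |x - m| ≤ |x| + (|m₀| + 1) := by
        calc |x - m| ≤ |x| + |m| := abs_sub _ _
          _ ≤ |x| + (|m₀| + 1) := by linarith
      have hE : Real.exp (-(Hfun β θ m x)) ≤ Real.exp (5 * β / 4) * Real.exp (-β * x ^ 2) :=
        aux_exp_H_le hβ hθ m x
      have hstep : |x - m| * (|x| ^ j * Real.exp (-(Hfun β θ m x)))
          ≤ (|x| + (|m₀| + 1)) * (|x| ^ j * (Real.exp (5 * β / 4) * Real.exp (-β * x ^ 2))) := by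
        apply mul_le_mul hxm (mul_le_mul_of_nonneg_left hE (by positivity))
          (by positivity) (by positivity)
      calc β * θ * |x - m| * (|x| ^ j * Real.exp (-(Hfun β θ m x)))
          = β * θ * (|x - m| * (|x| ^ j * Real.exp (-(Hfun β θ m x)))) := by ring
        _ ≤ β * θ * ((|x| + (|m₀| + 1)) *
              (|x| ^ j * (Real.exp (5 * β / 4) * Real.exp (-β * x ^ 2)))) :=
            mul_le_mul_of_nonneg_left hstep (by positivity)
        _ = β * θ * Real.exp (5 * β / 4) *
              (|x| ^ (j + 1) * Real.exp (-β * x ^ 2)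
                + (|m₀| + 1) * (|x| ^ j * Real.exp (-β * x ^ 2))) := by
            rw [pow_succ]; ring)
    hbi
    (by
      filter_upwards with x
      intro m _
      exact (aux_hasDerivAt_exp_H β θ x m).const_mul (x ^ j) |>.congr_deriv (by ring))
  obtain ⟨-, hd⟩ := key
  have heq : (∫ x : ℝ, β * θ * (x - m₀) * (x ^ j * Real.exp (-(Hfun β θ m₀ x))))
      = β * θ * (Afun β θ (j + 1) m₀ - m₀ * Afun β θ j m₀) := by
    have hfe : (fun x : ℝ => β * θ * (x - m₀) * (x ^ j * Real.exp (-(Hfun β θ m₀ x))))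
        = fun x : ℝ => β * θ * (x ^ (j + 1) * Real.exp (-(Hfun β θ m₀ x)))
          - β * θ * m₀ * (x ^ j * Real.exp (-(Hfun β θ m₀ x))) := by
      funext x; rw [pow_succ]; ring
    rw [hfe, integral_sub (((aux_int_A hβ hθ (j + 1) m₀)).const_mul _)
      (((aux_int_A hβ hθ j m₀)).const_mul _), integral_const_mul, integral_const_mul]
    unfold Afun
    ring
  rw [heq] at hd
  exact hd

lemma aux_Z_eq (β θ m : ℝ) : Zfun β θ m = Afun β θ 0 m := by
  unfold Zfun Afun; simp

lemma aux_N_eq (β θ m : ℝ) : Nfun β θ m = Afun β θ 1 m := by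
  unfold Nfun Afun; simp

lemma aux_A0_pos {β θ : ℝ} (hβ : 0 < β) (hθ : 0 < θ) (m : ℝ) :
    0 < Afun β θ 0 m := by
  have hi := aux_int_A hβ hθ 0 m
  unfold Afun
  refine (integral_pos_iff_support_of_nonneg_ae ?_ hi).mpr ?_
  · filter_upwards with x
    positivity
  · have h : Function.support (fun x : ℝ => x ^ 0 * Real.exp (-(Hfun β θ m x)))
        = Set.univ := by
      ext x
      simp only [Function.mem_support, Set.mem_univ, iff_true]
      positivity
    rw [h]
    simp

lemma aux_var {β θ : ℝ} (hβ : 0 < β) (hθ : 0 < θ) (m : ℝ) :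
    Afun β θ 1 m ^ 2 ≤ Afun β θ 2 m * Afun β θ 0 m := by
  have hq : ∀ c : ℝ, 0 ≤ Afun β θ 0 m * (c * c) + (-(2 * Afun β θ 1 m)) * c
      + Afun β θ 2 m := by
    intro c
    have h0 : 0 ≤ ∫ x : ℝ, (x - c) ^ 2 * Real.exp (-(Hfun β θ m x)) :=
      integral_nonneg fun x => by positivity
    have hexp : (fun x : ℝ => (x - c) ^ 2 * Real.exp (-(Hfun β θ m x)))
        = fun x : ℝ => (x ^ 2 * Real.exp (-(Hfun β θ m x))
            - (2 * c) * (x ^ 1 * Real.exp (-(Hfun β θ m x))))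
          + (c * c) * (x ^ 0 * Real.exp (-(Hfun β θ m x))) := by
      funext x; ring
    have hi21 : Integrable fun x : ℝ => x ^ 2 * Real.exp (-(Hfun β θ m x))
        - (2 * c) * (x ^ 1 * Real.exp (-(Hfun β θ m x))) :=
      (aux_int_A hβ hθ 2 m).sub ((aux_int_A hβ hθ 1 m).const_mul _)
    rw [hexp, integral_add hi21 ((aux_int_A hβ hθ 0 m).const_mul _),
      integral_sub (aux_int_A hβ hθ 2 m) ((aux_int_A hβ hθ 1 m).const_mul _),
      integral_const_mul, integral_const_mul] at h0
    unfold Afun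
    linarith
  have hd := discrim_le_zero hq
  rw [discrim] at hd
  nlinarith [hd]

lemma aux_hasDerivAt_F {β θ : ℝ} (hβ : 0 < β) (hθ : 0 < θ) (m : ℝ) :
    HasDerivAt (Fmap β θ)
      (β * θ * (Afun β θ 2 m * Afun β θ 0 m - Afun β θ 1 m ^ 2)
        / Afun β θ 0 m ^ 2) m := by
  have h0 := aux_hasDerivAt_A hβ hθ 0 m
  have h1 := aux_hasDerivAt_A hβ hθ 1 m
  have hz : Afun β θ 0 m ≠ 0 := (aux_A0_pos hβ hθ m).ne'
  have hF : Fmap β θ = fun m => Afun β θ 1 m / Afun β θ 0 m :=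
    funext fun m => by rw [Fmap, aux_N_eq, aux_Z_eq]
  rw [hF]
  have hdiv := h1.div h0 hz
  convert hdiv using 1
  · rfl
  · rfl
  · rfl
  · rw [show (1:ℕ) + 1 = 2 from rfl, zero_add]
    ring

/-- if `m*` is a fixed point of `F` with `βθ·(∫ x² p_{m*}(x) dx − (m*)²) < 1`,
then the fixed-point iteration is locally contractive at `m*`: there exist `δ > 0` and
`k ∈ [0,1)` such that `|F(x) − F(y)| ≤ k·|x − y|` for all `x, y ∈ [m* − δ, m* + δ]`. -/
theorem stmt_6 (β θ : ℝ) (hβ : 0 < β) (hθ : 0 < θ) (mstar : ℝ)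
    (hfix : Fmap β θ mstar = mstar)
    (hcrit : β * θ * ((∫ x : ℝ, x ^ 2 * pdens β θ mstar x) - mstar ^ 2) < 1) :
    ∃ δ > (0 : ℝ), ∃ k : ℝ, 0 ≤ k ∧ k < 1 ∧
      ∀ x ∈ Set.Icc (mstar - δ) (mstar + δ), ∀ y ∈ Set.Icc (mstar - δ) (mstar + δ),
        |Fmap β θ x - Fmap β θ y| ≤ k * |x - y| := by
  set G : ℝ → ℝ := fun m =>
    β * θ * (Afun β θ 2 m * Afun β θ 0 m - Afun β θ 1 m ^ 2) / Afun β θ 0 m ^ 2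
    with hG
  have hA0pos : ∀ m, 0 < Afun β θ 0 m := aux_A0_pos hβ hθ
  have hGcont : Continuous G := by
    apply Continuous.div
    · exact continuous_const.mul (((aux_cont_A hβ hθ 2).mul (aux_cont_A hβ hθ 0)).sub
        ((aux_cont_A hβ hθ 1).pow 2))
    · exact (aux_cont_A hβ hθ 0).pow 2
    · intro m; exact pow_ne_zero 2 (hA0pos m).ne'
  have hGnonneg : ∀ m, 0 ≤ G m := fun m =>
    div_nonneg (mul_nonneg (by positivity) (sub_nonneg.mpr (aux_var hβ hθ m)))
      (by positivity)
  -- G mstar < 1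
  have hZpos : 0 < Zfun β θ mstar := by rw [aux_Z_eq]; exact hA0pos mstar
  have hA1 : Afun β θ 1 mstar = mstar * Afun β θ 0 mstar := by
    have : Nfun β θ mstar / Zfun β θ mstar = mstar := hfix
    rw [aux_N_eq, aux_Z_eq, div_eq_iff (hA0pos mstar).ne'] at this
    linarith [this]
  have hint : (∫ x : ℝ, x ^ 2 * pdens β θ mstar x)
      = Afun β θ 2 mstar / Afun β θ 0 mstar := by
    unfold pdens
    rw [← aux_Z_eq]
    simp_rw [← mul_div_assoc]
    rw [integral_div]
    rw [aux_Z_eq]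
    rfl
  have hGm : G mstar < 1 := by
    have hA0 : Afun β θ 0 mstar ≠ 0 := (hA0pos mstar).ne'
    have : G mstar = β * θ * ((∫ x : ℝ, x ^ 2 * pdens β θ mstar x) - mstar ^ 2) := by
      simp only [hG]
      rw [hint, hA1]
      field_simp
    rw [this]; exact hcrit
  set k : ℝ := (G mstar + 1) / 2 with hk
  have hk0 : 0 ≤ k := by rw [hk]; linarith [hGnonneg mstar]
  have hk1 : k < 1 := by rw [hk]; linarith
  -- continuity gives δ
  have hca := hGcont.continuousAt (x := mstar)
  rw [Metric.continuousAt_iff] at hca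
  obtain ⟨ε, hε, hδ⟩ := hca ((1 - G mstar) / 2) (by linarith)
  refine ⟨ε / 2, by linarith, k, hk0, hk1, ?_⟩
  intro x hx y hy
  have hGb : ∀ m ∈ Set.Icc (mstar - ε / 2) (mstar + ε / 2), ‖G m‖ ≤ k := by
    intro m hm
    have hdist : dist m mstar < ε := by
      rw [Real.dist_eq, abs_lt]
      constructor <;> [linarith [hm.1]; linarith [hm.2]]
    have := hδ hdist
    rw [Real.dist_eq] at this
    have habs := abs_lt.mp this
    rw [Real.norm_eq_abs, abs_of_nonneg (hGnonneg m), hk]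
    linarith [habs.2]
  have key := Convex.norm_image_sub_le_of_norm_hasDerivWithin_le
    (f := Fmap β θ) (f' := G) (s := Set.Icc (mstar - ε / 2) (mstar + ε / 2)) (C := k)
    (fun m hm => (aux_hasDerivAt_F hβ hθ m).hasDerivWithinAt) hGb
    (convex_Icc _ _) hy hx
  rw [Real.norm_eq_abs, Real.norm_eq_abs] at key
  exact key
end
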